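/- arXiv:1805.12588 — 2 statements merged into one kernel-verified Lean document; each statement's English description precedes it below -/
import Mathlib

section
/- Let l ≥ 5 be a prime and H = {σ_1, σ_{−1}} the order-2 subgroup of Δ_l. Then 1 ∈ π_H(𝒥_l); explicitly, π_H(l·θ_l − (l−1)·(2−σ_2)·θ_l) = 1, where both l·θ_l and (2−σ_2)·θ_l belong to 𝒥_l. Consequently π_H(𝒥_l) = ℤ[H]. -/
open scoped NumberField nonZeroDivisors
open NumberField

noncomputable section

/-- The Stickelberger element `θ_l ∈ ℚ[(ℤ/l)ˣ]`. -/
def stickElt (l : ℕ) [NeZero l] : MonoidAlgebra ℚ (ZMod l)ˣ :=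
  (l : ℚ)⁻¹ • ∑ a : (ZMod l)ˣ, MonoidAlgebra.single a⁻¹ (((a : ZMod l).val : ℚ))

/-- The canonical map `ℤ[(ℤ/l)ˣ] → ℚ[(ℤ/l)ˣ]`. -/
def zqMap (l : ℕ) : MonoidAlgebra ℤ (ZMod l)ˣ →ₐ[ℤ] MonoidAlgebra ℚ (ZMod l)ˣ :=
  MonoidAlgebra.lift ℤ _ (ZMod l)ˣ (MonoidAlgebra.of ℚ (ZMod l)ˣ)

/-- The Stickelberger ideal `𝒥_l = ℤ[Δ_l]·θ_l ∩ ℤ[Δ_l]`. -/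
def stickIdeal (l : ℕ) [NeZero l] : Set (MonoidAlgebra ℤ (ZMod l)ˣ) :=
  {x | ∃ y : MonoidAlgebra ℤ (ZMod l)ˣ, zqMap l y * stickElt l = zqMap l x}


/-- The coefficient-projection `π_H : ℤ[Δ_l] → ℤ[H]`, keeping only the coefficients of
elements of the subgroup `H`. -/
def piH (l : ℕ) [NeZero l] (H : Subgroup (ZMod l)ˣ) (x : MonoidAlgebra ℤ (ZMod l)ˣ) :
    MonoidAlgebra ℤ H :=
  letI : Fintype H := Fintype.ofFinite H
  ∑ h : H, MonoidAlgebra.single h (x.coeff ↑h)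

/-- `l·θ_l`, which has integer coefficients: `l·θ_l = ∑_a a·σ_a⁻¹`. -/
def lTheta (l : ℕ) [NeZero l] : MonoidAlgebra ℤ (ZMod l)ˣ :=
  ∑ a : (ZMod l)ˣ, MonoidAlgebra.single a⁻¹ (((a : ZMod l).val : ℤ))

/- ------------------------------------------------------------------ -/
/- Auxiliary lemmas                                                    -/
/- ------------------------------------------------------------------ -/

lemma sum_single_inv_apply' {R : Type*} [Semiring R] {G : Type*} [Group G] [Fintype G]
    (f : G → R) (g : G) :
    (∑ a : G, MonoidAlgebra.single a⁻¹ (f a)).coeff g = f g⁻¹ := by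
  classical
  have : (∑ a : G, MonoidAlgebra.single a⁻¹ (f a)) =
      ∑ a : G, MonoidAlgebra.single a (f a⁻¹) := by
    rw [← Equiv.sum_comp (Equiv.inv G) (fun a => MonoidAlgebra.single a (f a⁻¹))]
    simp
  rw [this, MonoidAlgebra.coeff_sum, Finsupp.finset_sum_apply]
  simp [Finsupp.single_apply]

lemma zqMap_single' (l : ℕ) (a : (ZMod l)ˣ) (c : ℤ) :
    zqMap l (MonoidAlgebra.single a c) = MonoidAlgebra.single a (c : ℚ) := by
  rw [zqMap, MonoidAlgebra.lift_single, MonoidAlgebra.of_apply, MonoidAlgebra.smul_single]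
  norm_num

lemma stickElt_apply' (l : ℕ) [NeZero l] (g : (ZMod l)ˣ) :
    (stickElt l).coeff g = (l : ℚ)⁻¹ * (((g⁻¹ : (ZMod l)ˣ) : ZMod l).val : ℚ) := by
  rw [stickElt, MonoidAlgebra.coeff_smul_apply, sum_single_inv_apply' (G := (ZMod l)ˣ) (fun a => (((a : ZMod l).val : ℚ)))]
  simp

lemma lTheta_apply' (l : ℕ) [NeZero l] (g : (ZMod l)ˣ) :
    (lTheta l).coeff g = (((g⁻¹ : (ZMod l)ˣ) : ZMod l).val : ℤ) := by
  rw [lTheta, sum_single_inv_apply' (G := (ZMod l)ˣ) (fun a => (((a : ZMod l).val : ℤ)))]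

/-- The integral element corresponding to `(2 - σ₂)·θ`. -/
def tAux (l : ℕ) [NeZero l] : MonoidAlgebra ℤ (ZMod l)ˣ :=
  ∑ a : (ZMod l)ˣ, MonoidAlgebra.single a⁻¹
    (if l < 2 * (a : ZMod l).val then (1 : ℤ) else 0)

lemma tAux_apply' (l : ℕ) [NeZero l] (g : (ZMod l)ˣ) :
    (tAux l).coeff g = if l < 2 * ((g⁻¹ : (ZMod l)ˣ) : ZMod l).val then (1 : ℤ) else 0 := by
  rw [tAux, sum_single_inv_apply' (G := (ZMod l)ˣ) (fun a => (if l < 2 * (a : ZMod l).val then (1 : ℤ) else 0))]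

lemma coe_mem_H' (l : ℕ) (h : Subgroup.zpowers (-1 : (ZMod l)ˣ)) :
    (h : (ZMod l)ˣ) = 1 ∨ (h : (ZMod l)ˣ) = -1 := by
  obtain ⟨k, hk⟩ := Subgroup.mem_zpowers_iff.mp h.2
  have hsq : (-1 : (ZMod l)ˣ) ^ (2 : ℤ) = 1 := by
    rw [zpow_two]; simp
  rcases Int.even_or_odd k with ⟨m, hm⟩ | ⟨m, hm⟩
  · left
    rw [← hk, hm, ← two_mul, zpow_mul, hsq, one_zpow]
  · right
    rw [← hk, hm, zpow_add, zpow_mul, hsq, one_zpow, one_mul, zpow_one]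

lemma val_neg_one' (l : ℕ) (h : 3 ≤ l) : (-1 : ZMod l).val = l - 1 := by
  obtain ⟨m, rfl⟩ : ∃ m, l = m + 1 := ⟨l - 1, by omega⟩
  simp [ZMod.val_neg_one]

/-- Let `l ≥ 5` be a prime and `H = {σ_1, σ_{-1}}` the order-2 subgroup
of `Δ_l`.  Then `1 ∈ π_H(𝒥_l)`: explicitly, both `l·θ_l` and `(2 - σ_2)·θ_l` lie in
`𝒥_l`, and `π_H(l·θ_l - (l-1)·(2-σ_2)·θ_l) = 1`.  Consequently `π_H(𝒥_l) = ℤ[H]`. -/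
theorem stmt11 (l : ℕ) [Fact (Nat.Prime l)] [NeZero l] (hl : 5 ≤ l)
    (σ₂ : (ZMod l)ˣ) (hσ₂ : (σ₂ : ZMod l) = 2) :
    lTheta l ∈ stickIdeal l ∧
    ∃ t : MonoidAlgebra ℤ (ZMod l)ˣ, t ∈ stickIdeal l ∧
      zqMap l t = (MonoidAlgebra.single 1 2 - MonoidAlgebra.single σ₂ 1) * stickElt l ∧
      piH l (Subgroup.zpowers (-1 : (ZMod l)ˣ)) (lTheta l - ((l : ℤ) - 1) • t) = 1 ∧
      ∀ z : MonoidAlgebra ℤ (Subgroup.zpowers (-1 : (ZMod l)ˣ)),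
        ∃ x ∈ stickIdeal l, piH l (Subgroup.zpowers (-1 : (ZMod l)ˣ)) x = z := by
  classical
  have hodd : l % 2 = 1 :=
    Nat.odd_iff.mp ((Fact.out (p := l.Prime)).odd_of_ne_two (by omega))
  have hl0 : (l : ℚ) ≠ 0 := Nat.cast_ne_zero.mpr (by omega)
  haveI : Fact (1 < l) := ⟨by omega⟩
  set H := Subgroup.zpowers (-1 : (ZMod l)ˣ) with hH
  letI instH : Fintype H := Fintype.ofFinite H
  -- basic values
  have hval2 : (2 : ZMod l).val = 2 := by
    have h2 : ((2 : ℕ) : ZMod l).val = 2 % l := ZMod.val_natCast l 2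
    rw [Nat.mod_eq_of_lt (by omega)] at h2
    exact_mod_cast h2
  -- image of lTheta
  have hzq_lTheta : zqMap l (lTheta l) = (l : ℚ) • stickElt l := by
    rw [lTheta, map_sum, stickElt, smul_smul, mul_inv_cancel₀ hl0, one_smul]
    simp only [zqMap_single']
    norm_num
  have hmem_lTheta : lTheta l ∈ stickIdeal l := by
    refine ⟨(l : ℤ) • 1, ?_⟩
    rw [map_smul, map_one, smul_mul_assoc, one_mul, hzq_lTheta,
      ← Int.cast_smul_eq_zsmul ℚ]
    norm_num
  -- the key identity for tAux
  have heq : zqMap l (tAux l) =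
      (MonoidAlgebra.single 1 2 - MonoidAlgebra.single σ₂ 1) * stickElt l := by
    have hz : zqMap l (tAux l) = ∑ a : (ZMod l)ˣ, MonoidAlgebra.single a⁻¹
        (Int.cast (if l < 2 * (a : ZMod l).val then (1 : ℤ) else 0) : ℚ) := by
      rw [tAux, map_sum]
      simp only [zqMap_single']
    ext g
    rw [hz, sum_single_inv_apply' (G := (ZMod l)ˣ)
      (fun a => (Int.cast (if l < 2 * (a : ZMod l).val then (1 : ℤ) else 0) : ℚ))]
    rw [apply_ite (fun c : ℤ => (c : ℚ)), Int.cast_one, Int.cast_zero]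
    rw [sub_mul, MonoidAlgebra.coeff_sub, Finsupp.sub_apply, MonoidAlgebra.coeff_single_mul_apply,
      MonoidAlgebra.coeff_single_mul_apply, inv_one, one_mul, stickElt_apply', stickElt_apply',
      one_mul]
    have hinv : (σ₂⁻¹ * g)⁻¹ = g⁻¹ * σ₂ := by rw [mul_inv_rev, inv_inv]
    rw [hinv]
    set v : ℕ := ((g⁻¹ : (ZMod l)ˣ) : ZMod l).val with hv
    have hval : (((g⁻¹ * σ₂ : (ZMod l)ˣ) : ZMod l)).val = v * 2 % l := by
      rw [Units.val_mul, hσ₂, ZMod.val_mul, hval2]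
    rw [hval]
    have hvl : v < l := ZMod.val_lt _
    have hne : 2 * v ≠ l := by
      intro h; omega
    by_cases hcase : l < 2 * v
    · rw [if_pos hcase]
      have h1 : v * 2 % l = v * 2 - l := by
        rw [Nat.mod_eq_sub_mod (by omega), Nat.mod_eq_of_lt (by omega)]
      rw [h1, Nat.cast_sub (by omega)]
      push_cast
      field_simp
      ring
    · rw [if_neg hcase]
      have h1 : v * 2 % l = v * 2 := Nat.mod_eq_of_lt (by omega)
      rw [h1]
      push_cast
      ring
  have hmem_t : tAux l ∈ stickIdeal l := by
    refine ⟨MonoidAlgebra.single 1 2 - MonoidAlgebra.single σ₂ 1, ?_⟩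
    rw [map_sub, zqMap_single', zqMap_single', heq]
    norm_num
  -- values of w := lTheta - (l-1) • tAux
  set w : MonoidAlgebra ℤ (ZMod l)ˣ := lTheta l - ((l : ℤ) - 1) • tAux l with hwdef
  have hvm1 : ((-1 : (ZMod l)ˣ) : ZMod l).val = l - 1 := by
    rw [Units.val_neg, Units.val_one]
    exact val_neg_one' l (by omega)
  have hinvm1 : (-1 : (ZMod l)ˣ)⁻¹ = -1 := by
    rw [inv_eq_iff_mul_eq_one]
    simp
  have hw1 : w.coeff 1 = 1 := by
    rw [hwdef, MonoidAlgebra.coeff_sub, Finsupp.sub_apply, MonoidAlgebra.coeff_smul_apply, lTheta_apply', tAux_apply', inv_one]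
    simp only [Units.val_one, ZMod.val_one]
    rw [if_neg (by omega)]
    simp
  have hwm1 : w.coeff (-1) = 0 := by
    rw [hwdef, MonoidAlgebra.coeff_sub, Finsupp.sub_apply, MonoidAlgebra.coeff_smul_apply, lTheta_apply', tAux_apply', hinvm1,
      hvm1]
    rw [if_pos (by omega)]
    push_cast [Nat.cast_sub (by omega : 1 ≤ l)]
    simp only [smul_eq_mul]
    ring
  -- 1 ≠ -1 in H
  have hone_ne : (1 : (ZMod l)ˣ) ≠ -1 := by
    intro h
    have h2 := congrArg (fun u : (ZMod l)ˣ => ((u : ZMod l)).val) h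
    simp only [Units.val_one, ZMod.val_one] at h2
    rw [hvm1] at h2
    omega
  -- piH of w is 1
  have hpiw : piH l H w = 1 := by
    rw [piH]
    have hterm : ∀ h : H, MonoidAlgebra.single h (w.coeff ↑h) =
        if h = (1 : H) then MonoidAlgebra.single (1 : H) (1 : ℤ) else 0 := by
      intro h
      rcases coe_mem_H' l h with h1 | hm1
      · have he : h = 1 := OneMemClass.coe_eq_one.mp h1
        rw [he, if_pos rfl]
        simpa using congrArg (MonoidAlgebra.single (1 : H)) hw1
      · have hne : h ≠ 1 := by
          intro e
          rw [e, OneMemClass.coe_one] at hm1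
          exact hone_ne hm1
        rw [if_neg hne, hm1, hwm1]
        simp
    rw [Finset.sum_congr rfl (fun h _ => hterm h), Finset.sum_ite_eq' Finset.univ (1 : H)
      (fun _ => MonoidAlgebra.single (1 : H) (1 : ℤ)), if_pos (Finset.mem_univ _)]
    exact (MonoidAlgebra.one_def).symm
  -- closure properties of the Stickelberger ideal
  have hmem_mul : ∀ u x, x ∈ stickIdeal l → u * x ∈ stickIdeal l := by
    rintro u x ⟨y, hy⟩
    exact ⟨u * y, by rw [map_mul, map_mul, mul_assoc, hy]⟩
  have hmem_add : ∀ x₁ x₂, x₁ ∈ stickIdeal l → x₂ ∈ stickIdeal l →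
      x₁ + x₂ ∈ stickIdeal l := by
    rintro x₁ x₂ ⟨y₁, hy₁⟩ ⟨y₂, hy₂⟩
    exact ⟨y₁ + y₂, by rw [map_add, map_add, add_mul, hy₁, hy₂]⟩
  have hmem_smul : ∀ (c : ℤ) x, x ∈ stickIdeal l → c • x ∈ stickIdeal l := by
    rintro c x ⟨y, hy⟩
    exact ⟨c • y, by rw [map_smul, map_smul, smul_mul_assoc, hy]⟩
  have hmem_w : w ∈ stickIdeal l := by
    obtain ⟨y₁, hy₁⟩ := hmem_lTheta
    obtain ⟨y₂, hy₂⟩ := hmem_t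
    refine ⟨y₁ - ((l : ℤ) - 1) • y₂, ?_⟩
    rw [hwdef, map_sub, map_smul, map_sub, map_smul, sub_mul, smul_mul_assoc, hy₁, hy₂]
  -- piH is additive and compatible with multiplication by singles from H
  have hpiH_add : ∀ x y, piH l H (x + y) = piH l H x + piH l H y := by
    intro x y
    rw [piH, piH, piH, ← Finset.sum_add_distrib]
    refine Finset.sum_congr rfl fun h _ => ?_
    rw [MonoidAlgebra.coeff_add, Finsupp.add_apply]
    exact MonoidAlgebra.single_add h _ _
  have hpiH_single_mul : ∀ (h : H) (c : ℤ) (x : MonoidAlgebra ℤ (ZMod l)ˣ),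
      piH l H (MonoidAlgebra.single ((h : (ZMod l)ˣ)) c * x) =
        MonoidAlgebra.single h c * piH l H x := by
    intro h c x
    rw [piH, piH, Finset.mul_sum]
    refine Finset.sum_equiv (Equiv.mulLeft (h⁻¹ : H)) (by simp) ?_
    intro k _
    rw [MonoidAlgebra.coeff_single_mul_apply, MonoidAlgebra.single_mul_single]
    simp only [Equiv.coe_mulLeft]
    rw [mul_inv_cancel_left]
    rfl
  -- surjectivity
  have hsurj : ∀ z : MonoidAlgebra ℤ H, ∃ x ∈ stickIdeal l, piH l H x = z := by
    intro z
    induction z using MonoidAlgebra.induction with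
    | zero => exact ⟨0, ⟨0, by simp⟩, by simp [piH]⟩
    | single_add h c f hf hc ih =>
      obtain ⟨x, hx, hpix⟩ := ih
      refine ⟨MonoidAlgebra.single ((h : (ZMod l)ˣ)) c * w + x,
        hmem_add _ _ (hmem_mul _ _ hmem_w) hx, ?_⟩
      rw [hpiH_add, hpiH_single_mul, hpiw, mul_one, hpix]
  exact ⟨hmem_lTheta, tAux l, hmem_t, heq, hpiw, hsurj⟩

end
end

section
/- Let l be an odd prime and H any subgroup of Δ_l. Then π_H(𝒥_l), the image of the Stickelberger ideal under the coefficient-projection π_H, is an ideal of the group ring ℤ[H] (even though π_H itself is not a ring homomorphism). -/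
open scoped NumberField nonZeroDivisors
open NumberField

noncomputable section

lemma piH_apply (l : ℕ) [NeZero l] (H : Subgroup (ZMod l)ˣ)
    (x : MonoidAlgebra ℤ (ZMod l)ˣ) (h : H) : (piH l H x).coeff h = x.coeff ↑h := by
  letI : Fintype H := Fintype.ofFinite H
  rw [piH, MonoidAlgebra.coeff_sum, Finsupp.finset_sum_apply]
  simp [MonoidAlgebra.coeff_single, Finsupp.single_apply]

lemma piH_add (l : ℕ) [NeZero l] (H : Subgroup (ZMod l)ˣ)
    (x y : MonoidAlgebra ℤ (ZMod l)ˣ) : piH l H (x + y) = piH l H x + piH l H y := by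
  ext h
  rw [MonoidAlgebra.coeff_add, Finsupp.add_apply, piH_apply, piH_apply, piH_apply, MonoidAlgebra.coeff_add, Finsupp.add_apply]

lemma piH_single_mul (l : ℕ) [NeZero l] (H : Subgroup (ZMod l)ˣ) (h : H) (n : ℤ)
    (x : MonoidAlgebra ℤ (ZMod l)ˣ) :
    piH l H (MonoidAlgebra.single ((h : (ZMod l)ˣ)) n * x) = MonoidAlgebra.single h n * piH l H x := by
  ext h'
  rw [piH_apply, MonoidAlgebra.coeff_single_mul_apply, MonoidAlgebra.coeff_single_mul_apply, piH_apply]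
  norm_cast

lemma stickIdeal_mul (l : ℕ) [NeZero l] (z x : MonoidAlgebra ℤ (ZMod l)ˣ)
    (hx : x ∈ stickIdeal l) : z * x ∈ stickIdeal l := by
  obtain ⟨y, hy⟩ := hx
  exact ⟨z * y, by rw [map_mul, map_mul, mul_assoc, hy]⟩

/-- For an odd prime `l` and any subgroup `H` of `Δ_l`, the image
`π_H(𝒥_l)` of the Stickelberger ideal under the coefficient projection `π_H` is an
ideal of the group ring `ℤ[H]`. -/
theorem stmt18 (l : ℕ) [Fact (Nat.Prime l)] [NeZero l] (hl : Odd l)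
    (H : Subgroup (ZMod l)ˣ) :
    ∃ I : Ideal (MonoidAlgebra ℤ H), (I : Set (MonoidAlgebra ℤ H)) = piH l H '' stickIdeal l := by
  classical
  have h0 : (0 : MonoidAlgebra ℤ H) ∈ piH l H '' stickIdeal l := by
    refine ⟨0, ⟨0, by simp⟩, ?_⟩
    ext h; simp [piH_apply]
  have hadd : ∀ u v, u ∈ piH l H '' stickIdeal l → v ∈ piH l H '' stickIdeal l →
      u + v ∈ piH l H '' stickIdeal l := by
    rintro _ _ ⟨x, ⟨y, hy⟩, rfl⟩ ⟨x', ⟨y', hy'⟩, rfl⟩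
    exact ⟨x + x', ⟨y + y', by rw [map_add, map_add, add_mul, hy, hy']⟩,
      piH_add l H x x'⟩
  refine ⟨{ carrier := piH l H '' stickIdeal l
            zero_mem' := h0
            add_mem' := fun ha hb => hadd _ _ ha hb
            smul_mem' := ?_ }, rfl⟩
  intro c x hx
  simp only [smul_eq_mul]
  induction c using MonoidAlgebra.induction_linear with
  | zero => simpa using h0
  | add a b ha hb => rw [add_mul]; exact hadd _ _ ha hb
  | single h n =>
      obtain ⟨a, haJ, rfl⟩ := hx
      exact ⟨MonoidAlgebra.single ((h : (ZMod l)ˣ)) n * a, stickIdeal_mul l _ _ haJ,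
        piH_single_mul l H h n a⟩

end
end
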